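/- Let r ≥ 2 and let P : [r]² → {0,1} be a binary predicate such that for all two-element subsets B, C ⊆ [r] the restriction P|_{B×C} is not a singleton. Then there exist an integer ℓ with 2 ≤ ℓ ≤ 2r and a function f mapping each assignment A : V → [r] to an assignment f(A) : V^γ → [ℓ] such that for every finite set V, every weighted directed graph G on vertex set V, and every assignment A : V → [r], Val_{G,P}(A) = Val_{γ(G), ℓ-Cut}(f(A)), where ℓ-Cut : [ℓ]² → {0,1} is defined by ℓ-Cut(x,y) = 1 iff x ≠ y. -/
import Mathlib


/-- The value of a binary CSP instance with predicate `P`, edge/scope set `S`,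
weights `w`, under assignment `A`. -/
def cspVal {W D : Type*} (P : D → D → Bool) (S : Finset (W × W)) (w : W × W → ℝ)
    (A : W → D) : ℝ :=
  ∑ e ∈ S, w e * (if P (A e.1) (A e.2) then 1 else 0)

/-- The restriction of `P` to `B × C` is a singleton: exactly one pair
`(b,c) ∈ B × C` satisfies `P b c = 1`. -/
def IsSingletonRestr {D : Type*} (P : D → D → Bool) (B C : Finset D) : Prop :=
  ∃! p : D × D, p.1 ∈ B ∧ p.2 ∈ C ∧ P p.1 p.2 = true

/-- Edge set of the bipartite double cover: `(u, v) ↦ (u⁽⁰⁾, v⁽¹⁾)`, where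
`u⁽⁰⁾ = Sum.inl u` and `v⁽¹⁾ = Sum.inr v`. -/
def dcEdges {V : Type*} [DecidableEq V] (E : Finset (V × V)) :
    Finset ((V ⊕ V) × (V ⊕ V)) :=
  E.image fun e => (Sum.inl e.1, Sum.inr e.2)

/-- Weights of the bipartite double cover: `w^γ(u⁽⁰⁾, v⁽¹⁾) = w(u, v)`. -/
def dcWeight {V : Type*} (w : V × V → ℝ) : (V ⊕ V) × (V ⊕ V) → ℝ
  | (Sum.inl u, Sum.inr v) => w (u, v)
  | _ => 0

/-- The `ℓ-Cut` predicate: `ℓCut x y = 1` iff `x ≠ y`. -/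
def ellCut {ℓ : ℕ} : Fin ℓ → Fin ℓ → Bool := fun x y => decide (x ≠ y)

/-- if no restriction of `P : [r]² → {0,1}` (with `r ≥ 2`) to a
product of two-element subdomains is a singleton, then there are `2 ≤ ℓ ≤ 2r`
and, for every finite set `V`, a map `f` turning assignments `A : V → [r]` into
assignments `V^γ → [ℓ]` such that the value of any weighted directed graph `G`
on `V` under `P` equals the value of its bipartite double cover under `ℓ-Cut`
at `f(A)`. -/
theorem stmt5 {r : ℕ} (hr : 2 ≤ r) (P : Fin r → Fin r → Bool)
    (hP : ∀ B C : Finset (Fin r), B.card = 2 → C.card = 2 →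
      ¬ IsSingletonRestr P B C) :
    ∃ ℓ : ℕ, 2 ≤ ℓ ∧ ℓ ≤ 2 * r ∧
      ∀ (V : Type) [Fintype V] [DecidableEq V],
        ∃ f : (V → Fin r) → (V ⊕ V → Fin ℓ),
          ∀ (E : Finset (V × V)), (∀ e ∈ E, e.1 ≠ e.2) →
          ∀ w : V × V → ℝ, (∀ e ∈ E, 0 < w e) →
          ∀ A : V → Fin r,
            cspVal P E w A = cspVal ellCut (dcEdges E) (dcWeight w) (f A) := by
  classical
  -- no 2x2 submatrix with exactly one `true`
  have no2x2 : ∀ x x' y y' : Fin r, x ≠ x' → y ≠ y' →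
      P x y = false → P x' y = false → P x y' = false → P x' y' ≠ true := by
    intro x x' y y' hxx hyy h1 h2 h3 h4
    apply hP {x, x'} {y, y'} (by simp [Finset.card_insert_of_notMem, hxx])
      (by simp [Finset.card_insert_of_notMem, hyy])
    refine ⟨(x', y'), ⟨by simp, by simp, h4⟩, ?_⟩
    rintro ⟨a, b⟩ ⟨ha, hb, hab⟩
    simp only [Finset.mem_insert, Finset.mem_singleton] at ha hb
    rcases ha with rfl | rfl <;> rcases hb with rfl | rfl <;>
      simp_all
  -- rows of the complement are pairwise equal or disjoint
  have key : ∀ x x' y : Fin r, P x y = false → P x' y = false →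
      ∀ y', P x y' = P x' y' := by
    intro x x' y hx hx' y'
    by_contra hne
    have hxx : x ≠ x' := by rintro rfl; exact hne rfl
    cases h1 : P x y' <;> cases h2 : P x' y'
    · exact hne (h1.trans h2.symm)
    · have hyy : y ≠ y' := by rintro rfl; rw [hx'] at h2; exact Bool.false_ne_true h2
      exact no2x2 x x' y y' hxx hyy hx hx' h1 h2
    · have hyy : y ≠ y' := by rintro rfl; rw [hx] at h1; exact Bool.false_ne_true h1
      exact no2x2 x' x y y' hxx.symm hyy hx' hx h2 h1
    · exact hne (h1.trans h2.symm)
  -- representative of each row-class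
  have hne : ∀ x : Fin r, (Finset.univ.filter (fun x' => ∀ y, P x' y = P x y)).Nonempty :=
    fun x => ⟨x, by simp⟩
  set rep : Fin r → Fin r :=
    fun x => (Finset.univ.filter (fun x' => ∀ y, P x' y = P x y)).min' (hne x) with hrep
  have rep_row : ∀ x y, P (rep x) y = P x y := by
    intro x y
    have := Finset.min'_mem _ (hne x)
    rw [Finset.mem_filter] at this
    exact this.2 y
  have rep_congr : ∀ x x', (∀ y, P x y = P x' y) → rep x = rep x' := by
    intro x x' h
    have : (Finset.univ.filter (fun x'' => ∀ y, P x'' y = P x y))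
        = (Finset.univ.filter (fun x'' => ∀ y, P x'' y = P x' y)) := by
      ext a
      simp only [Finset.mem_filter, Finset.mem_univ, true_and]
      constructor <;> intro ha y
      · rw [ha y]; exact h y
      · rw [ha y]; exact (h y).symm
    have haux : ∀ (s t : Finset (Fin r)) (hs : s.Nonempty) (ht : t.Nonempty),
        s = t → s.min' hs = t.min' ht := by rintro s t hs ht rfl; rfl
    exact haux _ _ (hne x) (hne x') this
  set σ : Fin r → Fin (r + r) :=
    fun x => if h : ∃ y, P x y = false then Fin.castAdd r (rep x)
             else Fin.natAdd r ⟨1, by omega⟩ with hσ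
  set τ : Fin r → Fin (r + r) :=
    fun y => if h : ∃ x, P x y = false then Fin.castAdd r (rep h.choose)
             else Fin.natAdd r ⟨0, by omega⟩ with hτ
  have main : ∀ x y, P x y = false ↔ σ x = τ y := by
    intro x y
    constructor
    · intro h
      have h1 : ∃ y', P x y' = false := ⟨y, h⟩
      have h2 : ∃ x', P x' y = false := ⟨x, h⟩
      simp only [hσ, hτ, dif_pos h1, dif_pos h2]
      congr 1
      exact rep_congr x h2.choose (fun y' => key x h2.choose y h h2.choose_spec y')
    · intro h
      by_contra hc
      have hPxy : P x y = true := by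
        cases hh : P x y with
        | false => exact absurd hh hc
        | true => rfl
      simp only [hσ, hτ] at h
      split_ifs at h with h1 h2 h2
      · -- both castAdd
        have hv : (rep x : ℕ) = (rep h2.choose : ℕ) := by
          have := congrArg Fin.val h
          simpa using this
        have : rep x = rep h2.choose := Fin.ext hv
        have : P x y = false := by
          rw [← rep_row x y, this, rep_row]
          exact h2.choose_spec
        rw [this] at hPxy; exact Bool.false_ne_true hPxy
      · have := congrArg Fin.val h
        simp [Fin.castAdd, Fin.natAdd] at this
        omega
      · have := congrArg Fin.val h
        simp [Fin.castAdd, Fin.natAdd] at this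
        have hlt := (rep h2.choose).isLt
        omega
      · have := congrArg Fin.val h
        simp [Fin.natAdd] at this
  refine ⟨r + r, by omega, by omega, fun V _ _ => ⟨fun A => Sum.elim (σ ∘ A) (τ ∘ A), ?_⟩⟩
  intro E _ w _ A
  unfold cspVal dcEdges
  rw [Finset.sum_image (by rintro ⟨a, b⟩ _ ⟨c, d⟩ _ h; simpa [Prod.ext_iff] using h)]
  apply Finset.sum_congr rfl
  intro e _
  simp only [dcWeight, Sum.elim_inl, Sum.elim_inr, Function.comp_apply, ellCut]
  congr 1
  by_cases h : P (A e.1) (A e.2) = true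
  · rw [h]
    have : σ (A e.1) ≠ τ (A e.2) := by
      intro heq
      have := (main _ _).mpr heq
      rw [h] at this; simp at this
    simp [this]
  · have h' : P (A e.1) (A e.2) = false := by
      cases hh : P (A e.1) (A e.2) with
      | false => rfl
      | true => exact absurd hh h
    rw [h']
    have := (main _ _).mp h'
    simp [this]
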